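/- Over the two-letter alphabet Σ = {a,b}, FA(𝕃') is strictly contained in Fσ^R: every language in FA(𝕃') is an ω-rational countable union of closed sets, and there is a language in Fσ^R (for instance b*ab*a(a+b)^ω, the set of ω-words containing at least two occurrences of a) that is not in FA(𝕃'). -/

import Mathlib

open Set

/-- A finite automaton used for recognizing ω-words over the alphabet `A`:
a finite type of states, a transition relation, an initial state and an
acceptance table (a set of sets of states). -/
structure OFA (A : Type) : Type 1 where
  Q : Type
  [finQ : Finite Q]
  T : Q → A → Q → Prop
  q0 : Q
  Acc : Set (Set Q)

attribute [instance] OFA.finQ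

namespace OFA

variable {A : Type}

/-- Deterministic automaton: at most one successor per state and letter. -/
def Deterministic (M : OFA A) : Prop :=
  ∀ p a q q', M.T p a q → M.T p a q' → q = q'

/-- Complete automaton: at least one successor per state and letter. -/
def Complete (M : OFA A) : Prop :=
  ∀ p a, ∃ q, M.T p a q

/-- `p` is an initial infinite path of `M` with label `x`. -/
def InitPath (M : OFA A) (p : ℕ → M.Q) (x : ℕ → A) : Prop :=
  p 0 = M.q0 ∧ ∀ i, M.T (p i) (x i) (p (i + 1))

/-- States visited at least once (at a positive index). -/
def runSet (M : OFA A) (p : ℕ → M.Q) : Set M.Q := {q | ∃ i, 0 < i ∧ p i = q}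

/-- States visited infinitely often. -/
def infSet (M : OFA A) (p : ℕ → M.Q) : Set M.Q := {q | ∀ n, ∃ i, n ≤ i ∧ p i = q}

/-- States visited finitely many times but at least once. -/
def finSet (M : OFA A) (p : ℕ → M.Q) : Set M.Q := M.runSet p \ M.infSet p

/-- States visited finitely many times or never. -/
def ninfSet (M : OFA A) (p : ℕ → M.Q) : Set M.Q := (M.infSet p)ᶜ

end OFA

/-- Selector for the set of states associated to a path. -/
inductive CSel | run | inf | fin | ninf

/-- Selector for the comparison relation with a member of the acceptance table. -/
inductive RSel | meet | sub | eq

def OFA.csel {A : Type} (M : OFA A) : CSel → (ℕ → M.Q) → Set M.Q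
  | .run => M.runSet
  | .inf => M.infSet
  | .fin => M.finSet
  | .ninf => M.ninfSet

def RSel.holds {Q : Type} : RSel → Set Q → Set Q → Prop
  | .meet => fun S F => (S ∩ F).Nonempty
  | .sub => fun S F => S ⊆ F
  | .eq => fun S F => S = F

/-- The ω-language accepted by `M` under the condition `(c, r)`. -/
def OFA.Lang {A : Type} (M : OFA A) (c : CSel) (r : RSel) : Set (ℕ → A) :=
  {x | ∃ p, M.InitPath p x ∧ ∃ F ∈ M.Acc, RSel.holds r (M.csel c p) F}

/-- The ω-language accepted by `M` under the condition 𝔸 : some `F ∈ Acc` with `F ⊆ run p`. -/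
def OFA.LangA {A : Type} (M : OFA A) : Set (ℕ → A) :=
  {x | ∃ p, M.InitPath p x ∧ ∃ F ∈ M.Acc, F ⊆ M.runSet p}

/-- The ω-language accepted by `M` under the condition 𝔸' : some `F ∈ Acc` with `F ⊈ run p`. -/
def OFA.LangA' {A : Type} (M : OFA A) : Set (ℕ → A) :=
  {x | ∃ p, M.InitPath p x ∧ ∃ F ∈ M.Acc, ¬ F ⊆ M.runSet p}

/-- The ω-language accepted by `M` under the condition 𝕃 : some `F ∈ Acc` with `F ⊆ inf p`. -/
def OFA.LangL {A : Type} (M : OFA A) : Set (ℕ → A) :=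
  {x | ∃ p, M.InitPath p x ∧ ∃ F ∈ M.Acc, F ⊆ M.infSet p}

/-- The ω-language accepted by `M` under the condition 𝕃' : some `F ∈ Acc` with `F ⊈ inf p`. -/
def OFA.LangL' {A : Type} (M : OFA A) : Set (ℕ → A) :=
  {x | ∃ p, M.InitPath p x ∧ ∃ F ∈ M.Acc, ¬ F ⊆ M.infSet p}

/-- The class of ω-languages of the form `L M` for automata `M` satisfying `P`. -/
def AutClass (A : Type) (P : OFA A → Prop) (L : (M : OFA A) → Set (ℕ → A)) :
    Set (Set (ℕ → A)) :=
  {X | ∃ M : OFA A, P M ∧ L M = X}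

/-- The finite factor `x_i x_{i+1} … x_{j-1}` of the ω-word `x`. -/
def extract {A : Type} (x : ℕ → A) (i j : ℕ) : List A :=
  (List.range (j - i)).map fun k => x (i + k)

/-- The ω-language `V · U^ω`: ω-words of the form `u₀u₁u₂⋯` with `u₀ ∈ V`
and all `uᵢ` (i ≥ 1) nonempty words of `U`, described via cut points. -/
def omegaPiece {A : Type} (V U : Language A) : Set (ℕ → A) :=
  {x | ∃ c : ℕ → ℕ, (∀ i, c i < c (i + 1)) ∧
    extract x 0 (c 0) ∈ V ∧ ∀ i, extract x (c i) (c (i + 1)) ∈ U}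

/-- An ω-language is ω-rational if it is a finite union `⋃ᵢ Vᵢ · Uᵢ^ω`
with all `Vᵢ`, `Uᵢ` rational (regular) languages of finite words. -/
def IsOmegaRat {A : Type} (L : Set (ℕ → A)) : Prop :=
  ∃ (n : ℕ) (V U : Fin n → Language A),
    (∀ i, (V i).IsRegular) ∧ (∀ i, (U i).IsRegular) ∧
    L = ⋃ i, omegaPiece (V i) (U i)

/-- Countable union of closed sets. -/
def IsFsigmaSet {X : Type*} [TopologicalSpace X] (S : Set X) : Prop :=
  ∃ f : ℕ → Set X, (∀ n, IsClosed (f n)) ∧ S = ⋃ n, f n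

/-- Countable intersection of open sets. -/
def IsGdeltaSet {X : Type*} [TopologicalSpace X] (S : Set X) : Prop :=
  ∃ f : ℕ → Set X, (∀ n, IsOpen (f n)) ∧ S = ⋂ n, f n

section Aux

variable {A Q : Type}

/-- Finite paths in a transition system, all states after the start
required to lie in `R`. -/
def PathW (T : Q → A → Q → Prop) (R : Set Q) : Q → List A → Q → Prop
  | r, [], r' => r = r'
  | r, a :: u, r' => ∃ s, s ∈ R ∧ T r a s ∧ PathW T R s u r'

lemma extract_self (x : ℕ → A) (i : ℕ) : extract x i i = [] := by
  simp [extract]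

lemma extract_cons {i j : ℕ} (x : ℕ → A) (h : i < j) :
    extract x i j = x i :: extract x (i+1) j := by
  unfold extract
  have h1 : j - i = (j - (i+1)) + 1 := by omega
  rw [h1, List.range_succ_eq_map, List.map_cons, List.map_map]
  refine congrArg₂ List.cons (by simp) ?_
  apply List.map_congr_left
  intro a _
  simp [Function.comp]
  congr 1
  omega

lemma run_pathW {T : Q → A → Q → Prop} {R : Set Q} {p : ℕ → Q} {x : ℕ → A} :
    ∀ (n i : ℕ), (∀ k, i ≤ k → k < i + n → T (p k) (x k) (p (k+1))) →
      (∀ k, i < k → k ≤ i + n → p k ∈ R) →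
      PathW T R (p i) (extract x i (i + n)) (p (i + n)) := by
  intro n
  induction n with
  | zero => intro i _ _; rw [Nat.add_zero, extract_self]; rfl
  | succ n ih =>
    intro i ht hr
    rw [extract_cons x (by omega)]
    refine ⟨p (i+1), hr (i+1) (by omega) (by omega), ht i le_rfl (by omega), ?_⟩
    have h2 : i + (n + 1) = (i + 1) + n := by omega
    rw [h2]
    exact ih (i+1) (fun k hk hk' => ht k (by omega) (by omega))
      (fun k hk hk' => hr k (by omega) (by omega))

lemma pathW_run {T : Q → A → Q → Prop} {R : Set Q} {x : ℕ → A} :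
    ∀ (n i : ℕ) (r r' : Q), PathW T R r (extract x i (i+n)) r' →
      ∃ p : ℕ → Q, p i = r ∧ p (i+n) = r' ∧
        (∀ k, i ≤ k → k < i+n → T (p k) (x k) (p (k+1))) ∧
        (∀ k, i < k → k ≤ i+n → p k ∈ R) := by
  intro n
  induction n with
  | zero =>
    intro i r r' h
    rw [Nat.add_zero, extract_self] at h
    cases h
    refine ⟨fun _ => r, rfl, rfl, fun k h1 h2 => ?_, fun k h1 h2 => ?_⟩ <;> omega
  | succ n ih =>
    intro i r r' h
    rw [extract_cons x (by omega)] at h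
    obtain ⟨s, hsR, hT, hrest⟩ := h
    have h2 : i + (n + 1) = (i + 1) + n := by omega
    rw [h2] at hrest ⊢
    obtain ⟨p1, hp1s, hp1e, hp1t, hp1r⟩ := ih (i+1) s r' hrest
    refine ⟨fun k => if k ≤ i then r else p1 k, by simp, ?_, ?_, ?_⟩
    · have : ¬ ((i+1) + n ≤ i) := by omega
      simp [this, hp1e]
    · intro k hk hk'
      by_cases hk0 : k = i
      · subst hk0
        have e1 : ¬ (k + 1 ≤ k) := by omega
        simp only [le_refl, if_pos, e1, if_neg, if_false]
        simpa [hp1s] using hT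
      · have e1 : ¬ (k ≤ i) := by omega
        have e2 : ¬ (k + 1 ≤ i) := by omega
        simp only [e1, e2, if_false]
        exact hp1t k (by omega) (by omega)
    · intro k hk hk'
      have e1 : ¬ (k ≤ i) := by omega
      simp only [e1, if_false]
      by_cases hk0 : k = i + 1
      · subst hk0; rwa [hp1s]
      · exact hp1r k (by omega) (by omega)

end Aux
section Aux2

variable {A Q : Type}

/-- The NFA associated to a transition relation with restricted state set. -/
def relNFA (T : Q → A → Q → Prop) (R : Set Q) (q1 q2 : Q) : NFA A Q where
  step := fun r a => {s | s ∈ R ∧ T r a s}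
  start := {q1}
  accept := {q2}

lemma relNFA_evalFrom (T : Q → A → Q → Prop) (R : Set Q) (q1 q2 : Q) :
    ∀ (u : List A) (S : Set Q) (r' : Q),
      r' ∈ (relNFA T R q1 q2).evalFrom S u ↔ ∃ r ∈ S, PathW T R r u r' := by
  intro u
  induction u with
  | nil =>
    intro S r'
    rw [NFA.evalFrom_nil]
    exact ⟨fun h => ⟨r', h, rfl⟩,
      fun ⟨r, hr, h⟩ => by rwa [show r = r' from h] at hr⟩
  | cons a u ih =>
    intro S r'
    have e : (relNFA T R q1 q2).evalFrom S (a :: u)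
        = (relNFA T R q1 q2).evalFrom ((relNFA T R q1 q2).stepSet S a) u := rfl
    rw [e, ih]
    simp only [NFA.mem_stepSet, PathW, relNFA, Set.mem_setOf_eq]
    tauto

lemma relNFA_accepts (T : Q → A → Q → Prop) (R : Set Q) (q1 q2 : Q) :
    (relNFA T R q1 q2).accepts = {u : List A | PathW T R q1 u q2} := by
  ext u
  rw [NFA.mem_accepts]
  constructor
  · rintro ⟨s, hs, hev⟩
    obtain ⟨r, hr, hp⟩ := (relNFA_evalFrom T R q1 q2 u _ s).mp hev
    rw [show r = q1 from hr] at hp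
    rw [show s = q2 from hs] at hp
    exact hp
  · intro h
    exact ⟨q2, rfl, (relNFA_evalFrom T R q1 q2 u _ q2).mpr ⟨q1, rfl, h⟩⟩

lemma isRegular_pathLang [Finite Q] (T : Q → A → Q → Prop) (R : Set Q) (q1 q2 : Q) :
    Language.IsRegular {u : List A | PathW T R q1 u q2} := by
  classical
  letI := Fintype.ofFinite Q
  exact ⟨Set Q, inferInstance, (relNFA T R q1 q2).toDFA,
    by rw [NFA.toDFA_correct, relNFA_accepts]⟩

lemma isRegular_empty :
    Language.IsRegular (show Language A from (∅ : Set (List A))) := by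
  refine ⟨PUnit, inferInstance, ⟨fun _ _ => PUnit.unit, PUnit.unit, ∅⟩, ?_⟩
  ext u
  simp [DFA.mem_accepts]
  exact fun h => h

/-- Gluing finitely-described loops into an infinite run. -/
lemma glue {T : Q → A → Q → Prop} {R : Set Q} {x : ℕ → A} {c : ℕ → ℕ}
    (hc : ∀ k, c k < c (k+1)) {q0 s : Q}
    (h0 : PathW T Set.univ q0 (extract x 0 (c 0)) s)
    (h : ∀ k, PathW T R s (extract x (c k) (c (k+1))) s) :
    ∃ p : ℕ → Q, p 0 = q0 ∧ (∀ t, T (p t) (x t) (p (t+1))) ∧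
      (∀ t, c 0 < t → p t ∈ R) := by
  classical
  have cmono : StrictMono c := strictMono_nat_of_lt_succ hc
  -- prefix path
  obtain ⟨p0, hp0s, hp0e, hp0t, -⟩ :
      ∃ p : ℕ → Q, p 0 = q0 ∧ p (c 0) = s ∧
        (∀ k, 0 ≤ k → k < c 0 → T (p k) (x k) (p (k+1))) ∧
        (∀ k, 0 < k → k ≤ c 0 → p k ∈ Set.univ) := by
    have h' := pathW_run (T := T) (R := Set.univ) (x := x) (c 0) 0 q0 s
    rw [Nat.zero_add] at h'
    exact h' h0
  -- chunk paths
  have H : ∀ k, ∃ p : ℕ → Q, p (c k) = s ∧ p (c (k+1)) = s ∧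
      (∀ t, c k ≤ t → t < c (k+1) → T (p t) (x t) (p (t+1))) ∧
      (∀ t, c k < t → t ≤ c (k+1) → p t ∈ R) := by
    intro k
    have hck := hc k
    have e : c (k+1) = c k + (c (k+1) - c k) := by omega
    have h' := pathW_run (T := T) (R := R) (x := x) (c (k+1) - c k) (c k) s s
    rw [← e] at h'
    exact h' (h k)
  choose π hπs hπe hπt hπr using H
  have hex : ∀ t : ℕ, ∃ k, t ≤ c (k+1) := fun t => ⟨t, by
    have := cmono.le_apply (x := t+1); omega⟩
  set K : ℕ → ℕ := fun t => Nat.find (hex t) with hKdef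
  have hK2 : ∀ t, t ≤ c (K t + 1) := fun t => Nat.find_spec (hex t)
  have hK1 : ∀ t, c 0 < t → c (K t) < t := by
    intro t ht
    rcases Nat.eq_zero_or_pos (K t) with h' | h'
    · rw [h']; exact ht
    · have h'' := Nat.find_min (hex t) (show K t - 1 < K t by omega)
      have e : K t - 1 + 1 = K t := by omega
      rw [e] at h''
      omega
  have hKuniq : ∀ k t, c k < t → t ≤ c (k+1) → K t = k := by
    intro k t h1 h2
    have hle : K t ≤ k := Nat.find_le h2
    rcases eq_or_lt_of_le hle with h' | h'
    · exact h'
    · exfalso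
      have h5 := hK2 t
      have h6 : c (K t + 1) ≤ c k := cmono.monotone (by omega)
      omega
  set p : ℕ → Q := fun t => if t ≤ c 0 then p0 t else π (K t) t with hp
  have pEq : ∀ k t, c k < t → t ≤ c (k+1) → p t = π k t := by
    intro k t h1 h2
    have h0' : c 0 ≤ c k := cmono.monotone (Nat.zero_le k)
    have hn : ¬ (t ≤ c 0) := by omega
    simp only [hp, hn, if_false, hKuniq k t h1 h2]
  refine ⟨p, by simp [hp, hp0s], ?_, ?_⟩
  · intro t
    by_cases h1 : t + 1 ≤ c 0
    · have e1 : p t = p0 t := by simp [hp, show t ≤ c 0 by omega]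
      have e2 : p (t+1) = p0 (t+1) := by simp [hp, h1]
      rw [e1, e2]
      exact hp0t t (Nat.zero_le t) (by omega)
    · by_cases h2 : t ≤ c 0
      · -- t = c 0
        have ht : t = c 0 := by omega
        have e1 : p t = s := by
          rw [show p t = p0 t by simp [hp, h2], ht, hp0e]
        have e2 : p (t+1) = π 0 (t+1) :=
          pEq 0 (t+1) (by omega) (by have := hc 0; omega)
        rw [e1, e2, ht]
        have h5 := hπt 0 (c 0) le_rfl (hc 0)
        rwa [hπs 0] at h5
      · have h3 : c 0 < t := by omega
        obtain ⟨k, hk⟩ : ∃ k, K t = k := ⟨K t, rfl⟩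
        have hk1 : c k < t := hk ▸ hK1 t h3
        have hk2 : t ≤ c (k + 1) := hk ▸ hK2 t
        have e1 : p t = π k t := pEq k t hk1 hk2
        by_cases h4 : t < c (k + 1)
        · have e2 : p (t+1) = π k (t+1) := pEq k (t+1) (by omega) (by omega)
          rw [e1, e2]
          exact hπt k t (by omega) h4
        · have ht : t = c (k + 1) := by omega
          subst ht
          have e2 : p (c (k+1) + 1) = π (k+1) (c (k+1) + 1) :=
            pEq (k+1) _ (by omega) (by have := hc (k+1); omega)
          rw [e1, e2, hπe k]
          have h5 := hπt (k+1) (c (k+1)) le_rfl (hc (k+1))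
          rwa [hπs (k+1)] at h5
  · intro t ht
    rw [pEq (K t) t (hK1 t ht) (hK2 t)]
    exact hπr (K t) t (hK1 t ht) (hK2 t)

lemma exists_inf [Finite Q] (p : ℕ → Q) : ∃ s, ∀ n, ∃ i, n ≤ i ∧ p i = s := by
  by_contra h
  push_neg at h
  choose f hf using h
  letI := Fintype.ofFinite Q
  exact hf (p (Finset.univ.sup f)) (Finset.univ.sup f)
    (Finset.le_sup (Finset.mem_univ _)) rfl

lemma isFsigma_iUnion_closed {X : Type*} [TopologicalSpace X] {ι : Type} [Countable ι]
    {s : ι → Set X} (h : ∀ i, IsClosed (s i)) : IsFsigmaSet (⋃ i, s i) := by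
  rcases isEmpty_or_nonempty ι with h' | h'
  · exact ⟨fun _ => ∅, fun _ => isClosed_empty, by simp⟩
  · obtain ⟨f, hf⟩ := exists_surjective_nat ι
    exact ⟨fun n => s (f n), fun n => h _, (hf.iUnion_comp s).symm⟩

end Aux2
section Part1F

lemma part1_fsigma (M : OFA Bool) : IsFsigmaSet (OFA.LangL' M) := by
  classical
  letI : TopologicalSpace M.Q := ⊥
  haveI : DiscreteTopology M.Q := ⟨rfl⟩
  set C : M.Q → ℕ → Set ((ℕ → M.Q) × (ℕ → Bool)) := fun q n =>
    {z | (z.1 0 = M.q0 ∧ ∀ i, M.T (z.1 i) (z.2 i) (z.1 (i+1))) ∧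
      ∀ i, n ≤ i → z.1 i ≠ q} with hC
  have hCclosed : ∀ q n, IsClosed (C q n) := by
    intro q n
    have e : C q n = ({z : (ℕ → M.Q) × (ℕ → Bool) | z.1 0 = M.q0}
        ∩ ⋂ i, {z : (ℕ → M.Q) × (ℕ → Bool) | M.T (z.1 i) (z.2 i) (z.1 (i+1))})
        ∩ ⋂ i, {z : (ℕ → M.Q) × (ℕ → Bool) | n ≤ i → z.1 i ≠ q} := by
      ext z
      simp only [hC, Set.mem_setOf_eq, Set.mem_inter_iff, Set.mem_iInter]
    rw [e]
    refine IsClosed.inter (IsClosed.inter ?_ ?_) ?_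
    · have hco : Continuous (fun z : (ℕ → M.Q) × (ℕ → Bool) => z.1 0) :=
        (continuous_apply 0).comp continuous_fst
      exact IsClosed.preimage hco (isClosed_discrete ({M.q0} : Set M.Q))
    · refine isClosed_iInter fun i => ?_
      have hco : Continuous (fun z : (ℕ → M.Q) × (ℕ → Bool) =>
          ((z.1 i, z.2 i, z.1 (i+1)) : M.Q × Bool × M.Q)) :=
        (((continuous_apply i).comp continuous_fst).prodMk
          (((continuous_apply i).comp continuous_snd).prodMk
            ((continuous_apply (i+1)).comp continuous_fst)))
      exact IsClosed.preimage hco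
        (isClosed_discrete {t : M.Q × Bool × M.Q | M.T t.1 t.2.1 t.2.2})
    · refine isClosed_iInter fun i => ?_
      by_cases hi : n ≤ i
      · have e2 : {z : (ℕ → M.Q) × (ℕ → Bool) | n ≤ i → z.1 i ≠ q}
            = {z : (ℕ → M.Q) × (ℕ → Bool) | z.1 i ≠ q} := by
          ext z; simp [hi]
        rw [e2]
        have hco : Continuous (fun z : (ℕ → M.Q) × (ℕ → Bool) => z.1 i) :=
          (continuous_apply i).comp continuous_fst
        exact IsClosed.preimage hco (isClosed_discrete {t : M.Q | t ≠ q})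
      · have e2 : {z : (ℕ → M.Q) × (ℕ → Bool) | n ≤ i → z.1 i ≠ q} = Set.univ := by
          ext z; simp [hi]
        rw [e2]
        exact isClosed_univ
  have hmain : OFA.LangL' M = ⋃ (z : M.Q × ℕ),
      (if ∃ F ∈ M.Acc, z.1 ∈ F then Prod.snd '' C z.1 z.2 else ∅) := by
    ext x
    constructor
    · rintro ⟨p, hp, F, hF, hFn⟩
      obtain ⟨q, hqF, hq⟩ := Set.not_subset.mp hFn
      have hq' : ∃ n, ∀ i, n ≤ i → p i ≠ q := by
        by_contra hcon
        push_neg at hcon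
        exact hq fun n => hcon n
      obtain ⟨n, hn⟩ := hq'
      refine Set.mem_iUnion.mpr ⟨(q, n), ?_⟩
      rw [if_pos ⟨F, hF, hqF⟩]
      exact ⟨(p, x), ⟨⟨hp.1, hp.2⟩, hn⟩, rfl⟩
    · intro hx
      obtain ⟨⟨q, n⟩, hz⟩ := Set.mem_iUnion.mp hx
      by_cases hcond : ∃ F ∈ M.Acc, q ∈ F
      · rw [if_pos hcond] at hz
        obtain ⟨⟨p, x'⟩, hmem, hsnd⟩ := hz
        have hx' : x' = x := hsnd
        subst hx'
        obtain ⟨F, hF, hqF⟩ := hcond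
        refine ⟨p, ⟨hmem.1.1, hmem.1.2⟩, F, hF, fun hsub => ?_⟩
        obtain ⟨i, hi, hpi⟩ := hsub hqF n
        exact hmem.2 i hi hpi
      · rw [if_neg hcond] at hz
        exact absurd hz (Set.notMem_empty x)
  rw [hmain]
  refine isFsigma_iUnion_closed fun z => ?_
  by_cases hcond : ∃ F ∈ M.Acc, z.1 ∈ F
  · rw [if_pos hcond]
    exact isClosedMap_snd_of_compactSpace _ (hCclosed z.1 z.2)
  · rw [if_neg hcond]
    exact isClosed_empty

end Part1F
section Part1R

lemma part1_rat (M : OFA Bool) : IsOmegaRat (OFA.LangL' M) := by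
  classical
  set e := Finite.equivFin (M.Q × M.Q) with he
  refine ⟨Nat.card (M.Q × M.Q),
    fun i => if (∃ F ∈ M.Acc, (e.symm i).1 ∈ F) ∧ (e.symm i).2 ≠ (e.symm i).1
      then {u : List Bool | PathW M.T Set.univ M.q0 u (e.symm i).2}
      else (show Language Bool from (∅ : Set (List Bool))),
    fun i => {u : List Bool | PathW M.T ({(e.symm i).1}ᶜ : Set M.Q) (e.symm i).2 u (e.symm i).2},
    ?_, ?_, ?_⟩
  · intro i
    dsimp only
    by_cases hcond : (∃ F ∈ M.Acc, (e.symm i).1 ∈ F) ∧ (e.symm i).2 ≠ (e.symm i).1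
    · exact (congrArg Language.IsRegular (if_pos hcond)).mpr (isRegular_pathLang _ _ _ _)
    · exact (congrArg Language.IsRegular (if_neg hcond)).mpr isRegular_empty
  · intro i
    dsimp only
    exact isRegular_pathLang _ _ _ _
  · ext x
    constructor
    · rintro ⟨p, hp, F, hF, hFn⟩
      obtain ⟨q, hqF, hq⟩ := Set.not_subset.mp hFn
      have hq' : ∃ n, ∀ t, n ≤ t → p t ≠ q := by
        by_contra hcon
        push_neg at hcon
        exact hq fun n => hcon n
      obtain ⟨n0, hn0⟩ := hq'
      obtain ⟨s, hs⟩ := exists_inf p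
      have hsq : s ≠ q := by
        rintro rfl
        obtain ⟨t, ht, hpt⟩ := hs n0
        exact hn0 t ht hpt
      -- the cut sequence
      set cf : ℕ → ℕ := fun k =>
        Nat.rec (motive := fun _ => ℕ) (hs n0).choose (fun _ ck => (hs (ck+1)).choose) k with hcf
      have hc0a : n0 ≤ cf 0 := (hs n0).choose_spec.1
      have hc0b : p (cf 0) = s := (hs n0).choose_spec.2
      have hcs : ∀ k, cf k + 1 ≤ cf (k+1) ∧ p (cf (k+1)) = s := fun k =>
        (hs (cf k + 1)).choose_spec
      have hmono : ∀ k, cf k < cf (k+1) := fun k => by have := (hcs k).1; omega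
      have hpc : ∀ k, p (cf k) = s := by
        intro k
        cases k with
        | zero => exact hc0b
        | succ k => exact (hcs k).2
      have hle0 : ∀ k, cf 0 ≤ cf k :=
        fun k => (strictMono_nat_of_lt_succ hmono).monotone (Nat.zero_le k)
      refine Set.mem_iUnion.mpr ⟨e (q, s), ?_⟩
      simp only [Equiv.symm_apply_apply]
      refine (congrArg (fun V => x ∈ omegaPiece V _)
        (if_pos (⟨⟨F, hF, hqF⟩, hsq⟩ : (∃ F ∈ M.Acc, q ∈ F) ∧ s ≠ q))).mpr ?_
      refine ⟨cf, hmono, ?_, ?_⟩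
      · have h' := run_pathW (T := M.T) (R := Set.univ) (p := p) (x := x) (cf 0) 0
          (fun k _ _ => hp.2 k) (fun k _ _ => Set.mem_univ _)
        simp only [Nat.zero_add] at h'
        rw [hp.1, hc0b] at h'
        exact h'
      · intro k
        have e2 : cf (k+1) = cf k + (cf (k+1) - cf k) := by have := hmono k; omega
        have hmemb : ∀ t, cf k < t → t ≤ cf k + (cf (k+1) - cf k) →
            p t ∈ ({q}ᶜ : Set M.Q) := by
          intro t h1 _
          have h3 := hle0 k
          exact fun hh => hn0 t (by omega) hh
        have h' := run_pathW (T := M.T) (R := ({q}ᶜ : Set M.Q)) (p := p) (x := x)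
          (cf (k+1) - cf k) (cf k) (fun t _ _ => hp.2 t) hmemb
        rw [← e2, hpc k, hpc (k+1)] at h'
        exact h'
    · intro hx
      simp only [Set.mem_iUnion] at hx
      obtain ⟨i, hxi⟩ := hx
      set q := (e.symm i).1 with hqd
      set s := (e.symm i).2 with hsd
      by_cases hcond : (∃ F ∈ M.Acc, q ∈ F) ∧ s ≠ q
      · replace hxi := (congrArg (fun V => x ∈ omegaPiece V _) (if_pos hcond)).mp hxi
        obtain ⟨c, hcmono, hV, hU⟩ := hxi
        obtain ⟨p, hp0, htr, hR⟩ := glue hcmono hV hU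
        obtain ⟨⟨F, hF, hqF⟩, hsq⟩ := hcond
        refine ⟨p, ⟨hp0, htr⟩, F, hF, fun hsub => ?_⟩
        obtain ⟨t, ht, hpt⟩ := hsub hqF (c 0 + 1)
        exact (hR t (by omega)) hpt
      · replace hxi := (congrArg (fun V => x ∈ omegaPiece V _) (if_neg hcond)).mp hxi
        obtain ⟨c, -, hmem, -⟩ := hxi
        exact absurd hmem (Set.notMem_empty _)

end Part1R
section Part2

/-- Transition relation of the 3-state counter DFA. -/
def T3 : Fin 3 → Bool → Fin 3 → Prop :=
  fun s a s' => (s' : ℕ) = if a = true then min ((s : ℕ) + 1) 2 else (s : ℕ)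

/-- Trivial one-state transition relation. -/
def TU : Unit → Bool → Unit → Prop := fun _ _ _ => True

lemma pathW_TU : ∀ (u : List Bool), PathW TU Set.univ () u () := by
  intro u
  induction u with
  | nil => rfl
  | cons a u ih => exact ⟨(), Set.mem_univ _, trivial, ih⟩

lemma part2_fsigma :
    IsFsigmaSet {x : ℕ → Bool | ∃ i j, i < j ∧ x i = true ∧ x j = true} := by
  classical
  refine ⟨fun n => ⋃ (i : Fin n) (j : Fin n),
    (if (i : ℕ) < (j : ℕ) then {x : ℕ → Bool | x i = true ∧ x j = true} else ∅),
    ?_, ?_⟩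
  · intro n
    refine isClosed_iUnion_of_finite fun i => isClosed_iUnion_of_finite fun j => ?_
    split_ifs
    · rw [Set.setOf_and]
      have h1 : Continuous (fun x : ℕ → Bool => x i) := continuous_apply _
      have h2 : Continuous (fun x : ℕ → Bool => x j) := continuous_apply _
      exact IsClosed.inter
        (IsClosed.preimage h1 (isClosed_discrete {true}))
        (IsClosed.preimage h2 (isClosed_discrete {true}))
    · exact isClosed_empty
  · ext x
    simp only [Set.mem_setOf_eq, Set.mem_iUnion]
    constructor
    · rintro ⟨i, j, hij, hi, hj⟩
      refine ⟨j+1, ⟨i, by omega⟩, ⟨j, by omega⟩, ?_⟩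
      rw [if_pos (by simpa using hij)]
      exact ⟨hi, hj⟩
    · rintro ⟨n, i, j, hmem⟩
      by_cases h : (i : ℕ) < (j : ℕ)
      · rw [if_pos h] at hmem
        exact ⟨i, j, h, hmem.1, hmem.2⟩
      · rw [if_neg h] at hmem
        exact absurd hmem (Set.notMem_empty _)

lemma part2_rat :
    IsOmegaRat {x : ℕ → Bool | ∃ i j, i < j ∧ x i = true ∧ x j = true} := by
  classical
  refine ⟨1, fun _ => {u : List Bool | PathW T3 Set.univ 0 u 2},
    fun _ => {u : List Bool | PathW TU Set.univ () u ()},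
    fun _ => isRegular_pathLang _ _ _ _, fun _ => isRegular_pathLang _ _ _ _, ?_⟩
  ext x
  set nc : ℕ → ℕ := fun t => ((Finset.range t).filter (fun k => x k = true)).card
    with hncdef
  have hnc : ∀ t, nc (t+1) = nc t + (if x t = true then 1 else 0) := by
    intro t
    simp only [hncdef, Finset.range_add_one, Finset.filter_insert]
    split_ifs with h
    · rw [Finset.card_insert_of_notMem
        (fun hmem => by simpa using (Finset.mem_filter.mp hmem).1)]
    · simp
  have hnc0 : nc 0 = 0 := by simp [hncdef]
  simp only [Set.mem_setOf_eq, Set.mem_iUnion]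
  constructor
  · rintro ⟨i, j, hij, hi, hj⟩
    set pc : ℕ → Fin 3 := fun t => ⟨min (nc t) 2, by omega⟩ with hpcdef
    have hpc0 : pc 0 = 0 := by
      apply Fin.ext
      simp [hpcdef, hnc0]
    have hpc2 : pc (j+1) = 2 := by
      apply Fin.ext
      have h2 : 2 ≤ nc (j+1) := by
        have h1lt : 1 < ((Finset.range (j+1)).filter (fun k => x k = true)).card :=
          Finset.one_lt_card.mpr
            ⟨i, Finset.mem_filter.mpr ⟨Finset.mem_range.mpr (by omega), hi⟩,
             j, Finset.mem_filter.mpr ⟨Finset.mem_range.mpr (by omega), hj⟩, by omega⟩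
        exact h1lt
      simp only [hpcdef]
      omega
    have htr : ∀ k, T3 (pc k) (x k) (pc (k+1)) := by
      intro k
      simp only [T3, hpcdef]
      have := hnc k
      split_ifs with h <;> simp [h] at this <;> omega
    refine ⟨0, fun k => (j+1) + k, fun k => show (j+1) + k < (j+1) + (k+1) by omega, ?_, fun k => pathW_TU _⟩
    have h' := run_pathW (T := T3) (R := Set.univ) (p := pc) (x := x) (j+1) 0
      (fun k _ _ => htr k) (fun k _ _ => Set.mem_univ _)
    simp only [Nat.zero_add] at h'
    rw [hpc0, hpc2] at h'
    exact h'
  · rintro ⟨-, c, hc, hV, -⟩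
    have h'' := pathW_run (T := T3) (R := Set.univ) (x := x) (c 0) 0 0 2
    simp only [Nat.zero_add] at h''
    obtain ⟨π, hπ0, hπe, hπt, -⟩ := h'' hV
    have claim : ∀ k, k ≤ c 0 → (π k : ℕ) ≤ nc k := by
      intro k
      induction k with
      | zero => intro _; rw [hπ0, hnc0]; simp
      | succ k ih =>
        intro hk
        have h1 := hπt k (Nat.zero_le k) (by omega)
        simp only [T3] at h1
        have h2 := ih (by omega)
        rw [hnc k]
        split_ifs at h1 ⊢ <;> omega
    have h2 : 2 ≤ nc (c 0) := by
      have := claim (c 0) le_rfl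
      rw [hπe] at this
      simpa using this
    have h1lt : 1 < ((Finset.range (c 0)).filter (fun k => x k = true)).card := by
      exact h2
    obtain ⟨a, ha, b, hb, hab⟩ := Finset.one_lt_card.mp h1lt
    obtain ⟨ha1, ha2⟩ := Finset.mem_filter.mp ha
    obtain ⟨hb1, hb2⟩ := Finset.mem_filter.mp hb
    rcases Nat.lt_or_ge a b with h | h
    · exact ⟨a, b, h, ha2, hb2⟩
    · exact ⟨b, a, by omega, hb2, ha2⟩

end Part2
section Part3

lemma pump (M : OFA Bool) {p : ℕ → M.Q} {x : ℕ → Bool} (h : M.InitPath p x)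
    {i j : ℕ} (hij : i < j) (he : p i = p j) :
    ∃ φ : ℕ → ℕ, M.InitPath (fun t => p (φ t)) (fun t => x (φ t)) ∧
      (∀ t, t < i → φ t = t) ∧ (∀ t, φ t < j) ∧ (∀ t, i ≤ t → i ≤ φ t) := by
  have hd : 0 < j - i := by omega
  refine ⟨fun t => if t < i then t else i + (t - i) % (j - i), ⟨?_, ?_⟩, ?_, ?_, ?_⟩
  · show p (if 0 < i then 0 else i + (0 - i) % (j - i)) = M.q0
    rcases Nat.eq_zero_or_pos i with h0 | h0
    · rw [if_neg (by omega : ¬ (0:ℕ) < i)]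
      have e : i + (0 - i) % (j - i) = 0 := by rw [h0]; simp
      rw [e]; exact h.1
    · rw [if_pos h0]; exact h.1
  · intro t
    show M.T (p (if t < i then t else i + (t - i) % (j - i)))
      (x (if t < i then t else i + (t - i) % (j - i)))
      (p (if t+1 < i then t+1 else i + (t+1 - i) % (j - i)))
    have hstep : p (if t+1 < i then t+1 else i + (t+1 - i) % (j - i))
        = p ((if t < i then t else i + (t - i) % (j - i)) + 1) := by
      by_cases h1 : t + 1 < i
      · rw [if_pos h1, if_pos (by omega)]
      · rw [if_neg h1]
        by_cases h2 : t < i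
        · rw [if_pos h2]
          have e1 : (t + 1 - i) % (j - i) = 0 := by
            rw [show t + 1 - i = 0 by omega, Nat.zero_mod]
          rw [e1]
          congr 1
          omega
        · rw [if_neg h2]
          have hm : (t - i) % (j - i) < j - i := Nat.mod_lt _ hd
          have e2 : t + 1 - i = (t - i) + 1 := by omega
          by_cases h5 : (t - i) % (j - i) + 1 < j - i
          · have e : (t + 1 - i) % (j - i) = (t - i) % (j - i) + 1 := by
              rw [e2, Nat.add_mod, Nat.mod_eq_of_lt (show 1 < j - i by omega),
                Nat.mod_eq_of_lt (by omega)]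
            rw [e, ← Nat.add_assoc]
          · have h6 : (t - i) % (j - i) + 1 = j - i := by omega
            have e : (t + 1 - i) % (j - i) = 0 := by
              rw [e2, Nat.add_mod]
              rcases Nat.lt_or_ge 1 (j - i) with hd2 | hd2
              · rw [Nat.mod_eq_of_lt hd2, h6, Nat.mod_self]
              · have hji : j - i = 1 := by omega
                simp [hji, Nat.mod_one]
            rw [e, Nat.add_zero, he]
            congr 1
            omega
    rw [hstep]
    exact h.2 _
  · intro t ht
    show (if t < i then t else i + (t - i) % (j - i)) = t
    exact if_pos ht
  · intro t
    show (if t < i then t else i + (t - i) % (j - i)) < j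
    by_cases ht : t < i
    · rw [if_pos ht]; omega
    · rw [if_neg ht]
      have := Nat.mod_lt (t - i) hd
      omega
  · intro t ht
    show i ≤ (if t < i then t else i + (t - i) % (j - i))
    rw [if_neg (by omega)]
    omega

lemma part3 :
    {x : ℕ → Bool | ∃ i j, i < j ∧ x i = true ∧ x j = true}
      ∉ AutClass Bool (fun _ : OFA Bool => True) OFA.LangL' := by
  rintro ⟨M, -, hM⟩
  haveI : Nonempty M.Q := ⟨M.q0⟩
  letI := Fintype.ofFinite M.Q
  set N := Fintype.card M.Q with hN
  have hN0 : 0 < N := Fintype.card_pos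
  set x : ℕ → Bool := fun t => if t = N ∨ t = 2*N+1 then true else false with hx
  have hxL : x ∈ OFA.LangL' M := by
    rw [hM]
    refine ⟨N, 2*N+1, by omega, ?_, ?_⟩ <;> simp [hx]
  obtain ⟨p, hp, F, hF, hFn⟩ := hxL
  obtain ⟨q, hqF, hq⟩ := Set.not_subset.mp hFn
  have hq' : ∃ n0, ∀ t, n0 ≤ t → p t ≠ q := by
    by_contra hcon
    push_neg at hcon
    exact hq fun n => hcon n
  obtain ⟨n0, hn0⟩ := hq'
  -- rejection principle for words with at most one `true`
  have hrej : ∀ (ρ : ℕ → M.Q) (y : ℕ → Bool), M.InitPath ρ y →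
      (∀ a b, a < b → y a = true → y b = true → False) → F ⊆ M.infSet ρ := by
    intro ρ y hρ hy
    by_contra hns
    have hyL : y ∈ OFA.LangL' M := ⟨ρ, hρ, F, hF, hns⟩
    rw [hM] at hyL
    obtain ⟨a, b, hab, h1, h2⟩ := hyL
    exact hy a b hab h1 h2
  -- pigeonhole for state repetitions
  have pigeon : ∀ a : ℕ, ∃ k l, a ≤ k ∧ k < l ∧ l ≤ a + N ∧ p k = p l := by
    intro a
    obtain ⟨u, v, huv, hef⟩ := Fintype.exists_ne_map_eq_of_card_lt
      (fun t : Fin (N+1) => p (a + t)) (by rw [Fintype.card_fin, ← hN]; omega)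
    have hne : (u : ℕ) ≠ (v : ℕ) := fun hc => huv (Fin.ext hc)
    have hu := u.isLt
    have hv := v.isLt
    rcases Nat.lt_or_ge (u : ℕ) (v : ℕ) with h | h
    · exact ⟨a + u, a + v, by omega, by omega, by omega, hef⟩
    · exact ⟨a + v, a + u, by omega, by omega, by omega, hef.symm⟩
  -- first block: q occurs before N
  obtain ⟨k0, l0, hk0, hkl0, hl0, he0⟩ := pigeon 0
  obtain ⟨φ0, hφ0run, hφ0a, hφ0b, hφ0c⟩ := pump M hp hkl0 he0
  have hy0 : ∀ a b : ℕ, a < b → x (φ0 a) = true → x (φ0 b) = true → False := by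
    intro a b _ ha _
    have h1 := hφ0b a
    simp only [hx] at ha
    by_cases hc : φ0 a = N ∨ φ0 a = 2*N+1
    · omega
    · rw [if_neg hc] at ha; cases ha
  have hqinf0 := hrej _ _ hφ0run hy0 hqF
  obtain ⟨t0, ht0, hpt0⟩ := hqinf0 k0
  have ht1a : φ0 t0 < l0 := hφ0b t0
  set t1 := φ0 t0 with ht1
  have ht1b : t1 < N := by omega
  have hpt1 : p t1 = q := hpt0
  -- second block: q occurs in [N+1, 2N]
  obtain ⟨k2, l2, hk2, hkl2, hl2, he2⟩ := pigeon (N+1)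
  obtain ⟨φ2, hφ2run, hφ2a, hφ2b, hφ2c⟩ := pump M hp hkl2 he2
  have hy2 : ∀ a b : ℕ, a < b → x (φ2 a) = true → x (φ2 b) = true → False := by
    have key : ∀ a, x (φ2 a) = true → a = N := by
      intro a ha
      simp only [hx] at ha
      by_cases hc : φ2 a = N ∨ φ2 a = 2*N+1
      · have hb := hφ2b a
        have hfa : φ2 a = N := by omega
        by_cases h2 : a < k2
        · rw [hφ2a a h2] at hfa
          exact hfa
        · have := hφ2c a (by omega)
          omega
      · rw [if_neg hc] at ha; cases ha
    intro a b hab ha hb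
    have e1 := key a ha
    have e2 := key b hb
    omega
  have hqinf2 := hrej _ _ hφ2run hy2 hqF
  obtain ⟨s0, hs0a, hs0b⟩ := hqinf2 k2
  have ht2a : N + 1 ≤ φ2 s0 := le_trans (by omega) (hφ2c s0 hs0a)
  have ht2b : φ2 s0 < l2 := hφ2b s0
  set t2 := φ2 s0 with ht2
  have hpt2 : p t2 = q := hs0b
  -- the final run on a word with exactly one `true`
  set σ : ℕ → M.Q := fun t => if t < t1 then p t else p (t2 + (t - t1)) with hσ
  set w : ℕ → Bool := fun t => if t < t1 then x t else x (t2 + (t - t1)) with hw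
  have hσrun : M.InitPath σ w := by
    constructor
    · rcases Nat.eq_zero_or_pos t1 with h0 | h0
      · have e1 : σ 0 = p (t2 + (0 - t1)) := by simp [hσ, h0]
        rw [e1, show t2 + (0 - t1) = t2 by omega, hpt2, ← hpt1, h0]
        exact hp.1
      · have e1 : σ 0 = p 0 := by simp [hσ, h0]
        rw [e1]
        exact hp.1
    · intro t
      by_cases h1 : t + 1 ≤ t1
      · by_cases h2 : t + 1 < t1
        · show M.T (σ t) (w t) (σ (t+1))
          simp only [hσ, hw]
          rw [if_pos (show t < t1 by omega), if_pos (show t < t1 by omega),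
            if_pos h2]
          exact hp.2 t
        · -- t + 1 = t1
          show M.T (σ t) (w t) (σ (t+1))
          simp only [hσ, hw]
          rw [if_neg (show ¬ t + 1 < t1 by omega), if_pos (show t < t1 by omega),
            if_pos (show t < t1 by omega),
            show t2 + (t + 1 - t1) = t2 by omega, hpt2, ← hpt1,
            show t1 = t + 1 by omega]
          exact hp.2 t
      · show M.T (σ t) (w t) (σ (t+1))
        simp only [hσ, hw]
        rw [if_neg (show ¬ t < t1 by omega), if_neg (show ¬ t < t1 by omega),
          if_neg (show ¬ t + 1 < t1 by omega),
          show t2 + (t + 1 - t1) = (t2 + (t - t1)) + 1 by omega]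
        exact hp.2 _
  have hww : ∀ a, w a = true → a = t1 + (2*N + 1 - t2) := by
    intro a ha
    simp only [hw, hx] at ha
    by_cases h1 : a < t1
    · rw [if_pos h1] at ha
      by_cases h2 : a = N ∨ a = 2*N+1
      · omega
      · rw [if_neg h2] at ha; cases ha
    · rw [if_neg h1] at ha
      by_cases h2 : t2 + (a - t1) = N ∨ t2 + (a - t1) = 2*N+1
      · omega
      · rw [if_neg h2] at ha; cases ha
  have hσL : w ∈ OFA.LangL' M := by
    refine ⟨σ, hσrun, F, hF, fun hsub => ?_⟩
    obtain ⟨t, ht, hqt⟩ := hsub hqF (t1 + n0 + 1)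
    have h1 : ¬ t < t1 := by omega
    simp only [hσ] at hqt
    rw [if_neg h1] at hqt
    exact hn0 (t2 + (t - t1)) (by omega) hqt
  rw [hM] at hσL
  obtain ⟨a, b, hab, h1, h2⟩ := hσL
  have e1 := hww a h1
  have e2 := hww b h2
  omega

end Part3
/-- Over the alphabet `Bool` we take `a := true` and `b := false`.
FA(𝕃') is strictly contained in Fσ^R: every language in FA(𝕃') is an
ω-rational Fσ set, and the set of ω-words with at least two occurrences of `a`
is an ω-rational Fσ set which is not in FA(𝕃'). -/
theorem stmt_15 :
    (∀ L ∈ AutClass Bool (fun _ : OFA Bool => True) OFA.LangL', IsFsigmaSet L ∧ IsOmegaRat L) ∧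
    (IsFsigmaSet {x : ℕ → Bool | ∃ i j, i < j ∧ x i = true ∧ x j = true} ∧ IsOmegaRat {x : ℕ → Bool | ∃ i j, i < j ∧ x i = true ∧ x j = true}) ∧
    {x : ℕ → Bool | ∃ i j, i < j ∧ x i = true ∧ x j = true} ∉ AutClass Bool (fun _ : OFA Bool => True) OFA.LangL' := by
  refine ⟨?_, ⟨part2_fsigma, part2_rat⟩, part3⟩
  rintro L ⟨M, -, rfl⟩
  exact ⟨part1_fsigma M, part1_rat M⟩
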